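/- Let (A,b,c) and (A',b',c') be realizations on Hilbert spaces H, H' of the same formal power series, i.e., ⟪b, p(A) c⟫ = ⟪b', p(A') c'⟫ for every polynomial p, and suppose (A',b',c') is observable, i.e., the closed linear span of {A'*ⁿ b' : n ≥ 0} is H'. Then the assignment S₀(p(A)c) := p(A')c' is well-defined on the (not necessarily closed) linear span of {Aⁿ c : n ≥ 0}: if p(A)c = q(A)c then p(A')c' = q(A')c'. -/

import Mathlib

/-- Well-definedness of the pseudo-similarity `S₀ (p(A) c) := p(A') c'`: if two
realizations generate the same power series and `(A',b',c')` is observable, then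
`p(A) c = q(A) c` implies `p(A') c' = q(A') c'`. -/
theorem stmt11 {H H' : Type*}
    [NormedAddCommGroup H] [InnerProductSpace ℂ H] [CompleteSpace H]
    [NormedAddCommGroup H'] [InnerProductSpace ℂ H'] [CompleteSpace H']
    (A : H →L[ℂ] H) (b c : H) (A' : H' →L[ℂ] H') (b' c' : H')
    (hsame : ∀ p : Polynomial ℂ,
      @inner ℂ H _ b ((Polynomial.aeval A p) c) =
        @inner ℂ H' _ b' ((Polynomial.aeval A' p) c'))
    (hobs : (Submodule.span ℂ
        (Set.range fun n : ℕ => ((ContinuousLinearMap.adjoint A') ^ n) b')).topologicalClosure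
          = ⊤) :
    ∀ p q : Polynomial ℂ,
      (Polynomial.aeval A p) c = (Polynomial.aeval A q) c →
        (Polynomial.aeval A' p) c' = (Polynomial.aeval A' q) c' := by
  intro p q hpq
  set d := (Polynomial.aeval A' p) c' - (Polynomial.aeval A' q) c' with hd
  suffices hdz : d = 0 by
    have := sub_eq_zero.mp hdz
    exact this
  -- key computation: ⟪b', A'^n r(A') c'⟫ = ⟪b, A^n r(A) c⟫
  have aux : ∀ (n : ℕ) (r : Polynomial ℂ),
      (A' ^ n) ((Polynomial.aeval A' r) c') = (Polynomial.aeval A' (Polynomial.X ^ n * r)) c' := by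
    intro n r
    rw [map_mul, map_pow, Polynomial.aeval_X]
    rfl
  have auxH : ∀ (n : ℕ) (r : Polynomial ℂ),
      (A ^ n) ((Polynomial.aeval A r) c) = (Polynomial.aeval A (Polynomial.X ^ n * r)) c := by
    intro n r
    rw [map_mul, map_pow, Polynomial.aeval_X]
    rfl
  have adj : ∀ (n : ℕ) (y x : H'),
      @inner ℂ H' _ (((ContinuousLinearMap.adjoint A') ^ n) y) x
        = @inner ℂ H' _ y ((A' ^ n) x) := by
    intro n
    induction n with
    | zero => simp
    | succ k ih =>
      intro y x
      rw [pow_succ' (ContinuousLinearMap.adjoint A') k, pow_succ A' k]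
      simp only [ContinuousLinearMap.mul_apply]
      rw [ContinuousLinearMap.adjoint_inner_left, ih]
  have key : ∀ n : ℕ, @inner ℂ H' _ (((ContinuousLinearMap.adjoint A') ^ n) b') d = 0 := by
    intro n
    rw [adj n b' d, hd, map_sub, inner_sub_right, aux, aux, ← hsame, ← hsame,
      ← auxH, ← auxH, hpq, sub_self]
  have hmem : d ∈ (Submodule.span ℂ
      (Set.range fun n : ℕ => ((ContinuousLinearMap.adjoint A') ^ n) b'))ᗮ := by
    rw [Submodule.mem_orthogonal]
    intro u hu
    induction hu using Submodule.span_induction with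
    | mem x hx =>
      obtain ⟨n, rfl⟩ := hx
      exact key n
    | zero => simp
    | add x y _ _ hx hy => rw [inner_add_left, hx, hy, add_zero]
    | smul a x _ hx => rw [inner_smul_left, hx, mul_zero]
  rw [Submodule.topologicalClosure_eq_top_iff] at hobs
  rw [hobs, Submodule.mem_bot] at hmem
  exact hmem
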